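/- Let H be an infinite-dimensional separable complex Hilbert space. Consider the set 𝒩 of normal bounded linear operators on H (operators N with N*∘N = N∘N*), and the equivalence relation on 𝒩 given by N ∼ M iff there exists a unitary operator V on H with M = V⁻¹ ∘ N ∘ V. Then the quotient 𝒩/∼ (the set of unitary equivalence classes of normal operators on H) has cardinality equal to the continuum 𝔠 = 2^ℵ₀ (Cardinal.continuum). -/

import Mathlib

open scoped InnerProductSpace

noncomputable section

variable (H : Type*) [NormedAddCommGroup H] [InnerProductSpace ℂ H] [CompleteSpace H]

/-- The set of normal bounded linear operators on `H`. -/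
def NormalOps : Type _ :=
  {N : H →L[ℂ] H //
    ContinuousLinearMap.adjoint N ∘L N = N ∘L ContinuousLinearMap.adjoint N}

/-- Unitary equivalence of normal operators: `N ∼ M` iff `M = V⁻¹ ∘ N ∘ V` for some unitary
`V` on `H` (here `V⁻¹ = (↑(V⁻¹) : H →L[ℂ] H)` within the unitary group, and composition is
multiplication of operators). -/
def unitEquiv (N M : NormalOps H) : Prop :=
  ∃ V : ↥(unitary (H →L[ℂ] H)), M.1 = (↑(V⁻¹) : H →L[ℂ] H) * N.1 * (↑V : H →L[ℂ] H)

open Cardinal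

universe u

set_option maxHeartbeats 1000000

/-- A separable metric space has cardinality at most the continuum. -/
lemma auxCardLeCont {X : Type u} [MetricSpace X] [TopologicalSpace.SeparableSpace X] :
    Cardinal.mk X ≤ 𝔠 := by
  obtain ⟨s, hsc, hsd⟩ := TopologicalSpace.exists_countable_dense X
  rcases isEmpty_or_nonempty X with h | h
  · exact (mk_eq_zero X).le.trans (by positivity)
  have hmem : ∀ (x : X) (n : ℕ), ∃ y : s, dist x (y : X) < 1 / (n + 1) := by
    intro x n
    have := Metric.dense_iff.1 hsd x (1 / (n + 1)) (by positivity)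
    obtain ⟨y, hy1, hy2⟩ := this
    exact ⟨⟨y, hy2⟩, by simpa [Metric.mem_ball, dist_comm] using hy1⟩
  choose f hf using hmem
  have hinj : Function.Injective f := by
    intro x y hxy
    apply eq_of_forall_dist_le
    intro ε hε
    obtain ⟨n, hn⟩ := exists_nat_one_div_lt (half_pos hε)
    have h1 := hf x n
    have h2 := hf y n
    rw [hxy] at h1
    calc dist x y ≤ dist x (f y n : X) + dist (f y n : X) y := dist_triangle _ _ _
      _ ≤ 1 / (n+1) + 1 / (n+1) := by
          rw [dist_comm (f y n : X) y]; exact add_le_add h1.le h2.le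
      _ ≤ ε/2 + ε/2 := add_le_add hn.le hn.le
      _ = ε := add_halves ε
  calc #X ≤ #(ℕ → s) := mk_le_of_injective hinj
    _ = (lift.{0} #s) ^ (lift.{u} #ℕ) := mk_arrow _ _
    _ = #s ^ (ℵ₀ : Cardinal.{u}) := by rw [lift_uzero, mk_nat, lift_aleph0]
    _ ≤ 𝔠 ^ (ℵ₀ : Cardinal.{u}) :=
        power_le_power_right ((mk_le_aleph0_iff.2 hsc.to_subtype).trans aleph0_le_continuum)
    _ = 𝔠 := continuum_power_aleph0

/-- The bounded operators on a separable Hilbert space number at most continuum. -/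
lemma auxCardOpsLe (E : Type u) [NormedAddCommGroup E] [InnerProductSpace ℂ E]
    [CompleteSpace E] [TopologicalSpace.SeparableSpace E] : #(E →L[ℂ] E) ≤ 𝔠 := by
  obtain ⟨s, hsc, hsd⟩ := TopologicalSpace.exists_countable_dense E
  have hinj : Function.Injective (fun (f : E →L[ℂ] E) (x : s) => f (x : E)) := by
    intro f g hfg
    ext x
    have : Set.EqOn f g s := fun y hy => congrFun hfg ⟨y, hy⟩
    exact congrFun (Continuous.ext_on hsd f.continuous g.continuous this) x
  calc #(E →L[ℂ] E) ≤ #(s → E) := mk_le_of_injective hinj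
    _ = (lift.{u} #E) ^ (lift.{u} #s) := mk_arrow _ _
    _ = #E ^ #(s : Set E) := by rw [lift_id, lift_id]
    _ ≤ 𝔠 ^ #(s : Set E) := power_le_power_right auxCardLeCont
    _ ≤ 𝔠 ^ (ℵ₀ : Cardinal.{u}) := power_le_power_left continuum_ne_zero
        (mk_le_aleph0_iff.2 hsc.to_subtype)
    _ = 𝔠 := continuum_power_aleph0

lemma unitEquiv_equivalence : Equivalence (unitEquiv H) := by
  constructor
  · intro N
    exact ⟨1, by rw [inv_one, OneMemClass.coe_one, one_mul, mul_one]⟩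
  · rintro N M ⟨V, hV⟩
    refine ⟨V⁻¹, ?_⟩
    have h1 : (↑V : H →L[ℂ] H) * ↑(V⁻¹) = 1 := by
      rw [← MulMemClass.coe_mul, mul_inv_cancel, OneMemClass.coe_one]
    simp only [inv_inv]
    symm
    calc (↑V : H →L[ℂ] H) * M.1 * ↑(V⁻¹)
        = (↑V : H →L[ℂ] H) * (↑(V⁻¹) * N.1 * ↑V) * ↑(V⁻¹) := by rw [hV]
      _ = ((↑V : H →L[ℂ] H) * ↑(V⁻¹)) * N.1 * ((↑V : H →L[ℂ] H) * ↑(V⁻¹)) := by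
          noncomm_ring
      _ = N.1 := by rw [h1, one_mul, mul_one]
  · rintro N M P ⟨V, hV⟩ ⟨W, hW⟩
    refine ⟨V * W, ?_⟩
    rw [hW, hV, mul_inv_rev, MulMemClass.coe_mul, MulMemClass.coe_mul]
    noncomm_ring

lemma normal_smul_one (c : ℂ) :
    ContinuousLinearMap.adjoint (c • (1 : H →L[ℂ] H)) ∘L (c • (1 : H →L[ℂ] H))
      = (c • (1 : H →L[ℂ] H)) ∘L ContinuousLinearMap.adjoint (c • (1 : H →L[ℂ] H)) := by
  have h : ContinuousLinearMap.adjoint (c • (1 : H →L[ℂ] H))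
      = (starRingEnd ℂ c) • (1 : H →L[ℂ] H) := by
    rw [map_smulₛₗ]
    congr 1
    simpa [ContinuousLinearMap.one_def] using
      ContinuousLinearMap.adjoint_id (𝕜 := ℂ) (E := H)
  rw [h]
  simp [ContinuousLinearMap.smul_comp, ContinuousLinearMap.comp_smul, smul_smul, mul_comm]

/-- For an infinite-dimensional separable complex Hilbert space `H`, the set of unitary
equivalence classes of normal bounded operators on `H` has cardinality the continuum
`𝔠 = 2^ℵ₀`. -/
theorem stmt19 [TopologicalSpace.SeparableSpace H] (hinf : ¬ FiniteDimensional ℂ H) :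
    Cardinal.mk (Quot (unitEquiv H)) = Cardinal.continuum := by
  apply le_antisymm
  · calc #(Quot (unitEquiv H)) ≤ #(NormalOps H) := mk_quot_le
      _ ≤ #(H →L[ℂ] H) := mk_subtype_le _
      _ ≤ 𝔠 := auxCardOpsLe H
  · have hnt : Nontrivial H := by
      by_contra h
      rw [not_nontrivial_iff_subsingleton] at h
      exact hinf inferInstance
    obtain ⟨x, hx⟩ := exists_ne (0 : H)
    set g : ℂ → Quot (unitEquiv H) :=
      fun c => Quot.mk _ ⟨c • (1 : H →L[ℂ] H), normal_smul_one H c⟩ with hg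
    have hginj : Function.Injective g := by
      intro c c' h
      rw [hg] at h
      simp only at h
      replace h := (unitEquiv_equivalence H).eqvGen_iff.1 (Quot.eq.1 h)
      obtain ⟨V, hV⟩ := h
      have h2 : (↑(V⁻¹) : H →L[ℂ] H) * ↑V = 1 := by
        rw [← MulMemClass.coe_mul, inv_mul_cancel, OneMemClass.coe_one]
      simp only [mul_smul_comm, smul_mul_assoc, mul_one, h2] at hV
      have := DFunLike.congr_fun hV x
      simp only [ContinuousLinearMap.smul_apply, ContinuousLinearMap.one_apply] at this
      exact smul_left_injective ℂ hx this.symm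
    have := lift_mk_le'.2 ⟨⟨g, hginj⟩⟩
    rwa [mk_complex, lift_continuum, lift_uzero] at this

end
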